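/- For a > 0, the improper integral ∫_{0}^{∞} sin(a x²) cos(s x) dx converges for every real s and equals (1/2)·√(π/(2a))·(cos(s²/(4a)) − sin(s²/(4a))). -/

import Mathlib

open Filter Real MeasureTheory Set intervalIntegral
open scoped Topology

noncomputable def bdry (b : ℂ) (x : ℝ) : ℂ := Complex.exp (-b * x^2) * (-1/(2*b*x))

lemma hasDeriv_bdry (b : ℂ) (hb : b ≠ 0) {x : ℝ} (hx : x ≠ 0) :
    HasDerivAt (bdry b)
      (Complex.exp (-b*x^2) + Complex.exp (-b*x^2)/(2*b*x^2)) x := by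
  have hx' : (x:ℂ) ≠ 0 := Complex.ofReal_ne_zero.2 hx
  have h0 : HasDerivAt (fun y : ℝ => (y:ℂ)) 1 x := Complex.ofRealCLM.hasDerivAt
  have h1 : HasDerivAt (fun y : ℝ => -b * (y:ℂ)^2) (-b * (2*x)) x := by
    have := (h0.mul h0).const_mul (-b)
    convert this using 1
    · rfl
    · funext y; simp only [Pi.mul_apply]; ring
    · push_cast; ring
  have h2 : HasDerivAt (fun y : ℝ => Complex.exp (-b * (y:ℝ)^2))
      (Complex.exp (-b*x^2) * (-b * (2*x))) x := by
    simpa [mul_comm] using h1.cexp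
  have h3 : HasDerivAt (fun y : ℝ => (-1/(2*b*(y:ℂ))))
      ((1/(2*b)) * ((x:ℂ)^2)⁻¹) x := by
    have hmul : HasDerivAt (fun y : ℝ => 2*b*(y:ℂ)) (2*b*1) x := by
      simpa using h0.const_mul (2*b)
    have hne : 2*b*(x:ℂ) ≠ 0 := by simp [hb, hx']
    have h4 := (hasDerivAt_const x (-1:ℂ)).div hmul hne
    convert h4 using 1
    · rfl
    · rfl
    field_simp
    ring
  have h5 := h2.mul h3
  convert h5 using 1
  · rfl
  · rfl
  field_simp

lemma cont_f (b : ℂ) : Continuous (fun x : ℝ => Complex.exp (-b * (x:ℂ)^2)) :=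
  Complex.continuous_exp.comp (continuous_const.mul (Complex.continuous_ofReal.pow 2))

lemma contOn_h (b : ℂ) (hb : b ≠ 0) :
    ContinuousOn (fun x : ℝ => Complex.exp (-b * (x:ℂ)^2)/(2*b*(x:ℂ)^2))
    {x : ℝ | x ≠ 0} := by
  apply ((cont_f b).continuousOn).div
  · exact (continuous_const.mul (Complex.continuous_ofReal.pow 2)).continuousOn
  · intro x hx
    simp only [mem_setOf_eq] at hx
    exact mul_ne_zero (mul_ne_zero two_ne_zero hb)
      (pow_ne_zero 2 (Complex.ofReal_ne_zero.2 hx))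

lemma tail_ibp (b : ℂ) (hb : b ≠ 0) {R : ℝ} (hR : 1 ≤ R) :
    ∫ x in (1:ℝ)..R, Complex.exp (-b*(x:ℂ)^2)
      = (bdry b R - bdry b 1) - ∫ x in (1:ℝ)..R, Complex.exp (-b*(x:ℂ)^2)/(2*b*(x:ℂ)^2) := by
  have hsub : uIcc (1:ℝ) R ⊆ {x : ℝ | x ≠ 0} := by
    rw [uIcc_of_le hR]
    intro x hx
    have : (1:ℝ) ≤ x := hx.1
    simp only [mem_setOf_eq]; linarith
  have h1 : IntervalIntegrable (fun x : ℝ => Complex.exp (-b*(x:ℂ)^2)) volume 1 R :=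
    (cont_f b).intervalIntegrable 1 R
  have h2 : IntervalIntegrable (fun x : ℝ => Complex.exp (-b*(x:ℂ)^2)/(2*b*(x:ℂ)^2)) volume 1 R :=
    (ContinuousOn.mono (contOn_h b hb) hsub).intervalIntegrable
  have key := intervalIntegral.integral_eq_sub_of_hasDerivAt
    (f := bdry b)
    (f' := fun x : ℝ => Complex.exp (-b*(x:ℂ)^2) + Complex.exp (-b*(x:ℂ)^2)/(2*b*(x:ℂ)^2))
    (fun x hx => hasDeriv_bdry b hb (hsub hx)) (h1.add h2)
  rw [intervalIntegral.integral_add h1 h2] at key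
  linear_combination key

lemma babs {a ε : ℝ} (ha : 0 < a) (hε : 0 ≤ ε) : a ≤ ‖(ε:ℂ) - a*Complex.I‖ := by
  have := Complex.abs_im_le_norm ((ε:ℂ) - a*Complex.I)
  simp at this
  rwa [abs_of_pos ha] at this

lemma b_ne_zero {a ε : ℝ} (ha : 0 < a) (hε : 0 ≤ ε) : ((ε:ℂ) - a*Complex.I) ≠ 0 := by
  intro h
  have := babs ha hε
  rw [h] at this
  simp at this
  linarith

lemma norm_exp_le {a ε : ℝ} (hε : 0 ≤ ε) (x : ℝ) :
    ‖Complex.exp (-((ε:ℂ) - a*Complex.I) * (x:ℂ)^2)‖ ≤ 1 := by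
  rw [Complex.norm_exp]
  have hre : (-((ε:ℂ) - a*Complex.I) * (x:ℂ)^2).re = -ε * x^2 := by
    simp [Complex.mul_re, ← Complex.ofReal_pow]
  rw [hre]
  exact Real.exp_le_one_iff.2 (by nlinarith [sq_nonneg x])

lemma integrable_h {a ε : ℝ} (ha : 0 < a) (hε : 0 ≤ ε) :
    IntegrableOn (fun x : ℝ =>
      Complex.exp (-((ε:ℂ) - a*Complex.I) * (x:ℂ)^2)/(2*((ε:ℂ) - a*Complex.I)*(x:ℂ)^2))
      (Ioi (1:ℝ)) := by
  set b : ℂ := (ε:ℂ) - a*Complex.I with hbdef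
  apply Integrable.mono' (g := fun x : ℝ => (2*a)⁻¹ * x ^ (-2:ℝ))
  · exact (integrableOn_Ioi_rpow_of_lt (by norm_num) one_pos).const_mul _
  · exact ((contOn_h b (b_ne_zero ha hε)).mono
      (fun x (hx : x ∈ Ioi (1:ℝ)) => by simp only [mem_setOf_eq]; intro h; rw [h] at hx; simp at hx; linarith)).aestronglyMeasurable
      measurableSet_Ioi
  · rw [ae_restrict_iff' measurableSet_Ioi]
    filter_upwards with x
    intro hx
    have hx1 : (1:ℝ) < x := hx
    have hx0 : (0:ℝ) < x := by linarith
    rw [norm_div]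
    have hden : ‖2*b*(x:ℂ)^2‖ = 2 * ‖b‖ * x^2 := by
      simp [map_mul, abs_of_pos hx0, sq_abs]
    rw [hden]
    have h1 : ‖Complex.exp (-b * (x:ℂ)^2)‖ ≤ 1 := norm_exp_le hε x
    have h2 : 2 * a * x^2 ≤ 2 * ‖b‖ * x^2 := by
      have := babs ha hε
      nlinarith [sq_nonneg x]
    have hpos : 0 < 2 * a * x^2 := by positivity
    have hxr : x ^ (-2:ℝ) = (x^2)⁻¹ := by
      rw [Real.rpow_neg hx0.le, ← Real.rpow_natCast x 2]
      norm_num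
    calc ‖Complex.exp (-b * (x:ℂ)^2)‖ / (2 * ‖b‖ * x^2)
        ≤ 1 / (2 * a * x^2) := div_le_div₀ zero_le_one h1 hpos h2
      _ = (2*a)⁻¹ * x ^ (-2:ℝ) := by rw [hxr]; field_simp

lemma tendsto_bdry_zero {a ε : ℝ} (ha : 0 < a) (hε : 0 ≤ ε) :
    Tendsto (fun R : ℝ => bdry ((ε:ℂ)-a*Complex.I) R) atTop (nhds 0) := by
  set b := (ε:ℂ)-a*Complex.I with hbdef
  apply squeeze_zero_norm' (a := fun R : ℝ => (2*a)⁻¹ * R⁻¹)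
  · filter_upwards [eventually_gt_atTop 0] with R hR
    unfold bdry
    rw [norm_mul]
    have h1 : ‖Complex.exp (-b * (R:ℂ)^2)‖ ≤ 1 := norm_exp_le hε R
    have h2 : ‖(-1 : ℂ)/(2*b*(R:ℂ))‖ = 1/(2*‖b‖*R) := by
      rw [norm_div]
      simp [map_mul, abs_of_pos hR]
    have hab := babs ha hε
    rw [← hbdef] at hab
    have h3 : (1:ℝ)/(2*‖b‖*R) ≤ (2*a)⁻¹ * R⁻¹ := by
      rw [one_div, ← mul_inv]
      apply inv_anti₀ (by positivity)
      nlinarith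
    calc ‖Complex.exp (-b * (R:ℂ)^2)‖ * ‖(-1:ℂ)/(2*b*(R:ℂ))‖
        ≤ 1 * (1/(2*‖b‖*R)) := by
          apply mul_le_mul h1 (le_of_eq h2) (norm_nonneg _) zero_le_one
      _ ≤ (2*a)⁻¹ * R⁻¹ := by rw [one_mul]; exact h3
  · simpa using tendsto_inv_atTop_zero.const_mul ((2*a)⁻¹)

lemma tendsto_tail {a ε : ℝ} (ha : 0 < a) (hε : 0 ≤ ε) :
    Tendsto (fun R : ℝ => ∫ x in (1:ℝ)..R, Complex.exp (-((ε:ℂ)-a*Complex.I) * (x:ℂ)^2)) atTop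
      (nhds (-(bdry ((ε:ℂ)-a*Complex.I) 1)
        - ∫ x in Ioi (1:ℝ),
            Complex.exp (-((ε:ℂ)-a*Complex.I)*(x:ℂ)^2)/(2*((ε:ℂ)-a*Complex.I)*(x:ℂ)^2))) := by
  set b := (ε:ℂ)-a*Complex.I with hbdef
  have hb : b ≠ 0 := b_ne_zero ha hε
  have htail := intervalIntegral_tendsto_integral_Ioi 1 (integrable_h ha hε (a := a) (ε := ε))
    (tendsto_id (x := atTop))
  have hcomb := ((tendsto_bdry_zero ha hε).sub (tendsto_const_nhds (x := bdry b 1))).sub htail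
  rw [zero_sub] at hcomb
  apply Tendsto.congr' ?_ hcomb
  filter_upwards [eventually_ge_atTop 1] with R hR
  exact (tail_ibp b hb hR).symm

lemma gauss_identity {a ε : ℝ} (ha : 0 < a) (hε : 0 < ε) :
    ((π:ℂ)/((ε:ℂ) - a*Complex.I))^(1/2 : ℂ)/2
      = (∫ x in (0:ℝ)..1, Complex.exp (-((ε:ℂ) - a*Complex.I) * (x:ℂ)^2))
        + (-(bdry ((ε:ℂ)-a*Complex.I) 1)
          - ∫ x in Ioi (1:ℝ),
              Complex.exp (-((ε:ℂ)-a*Complex.I)*(x:ℂ)^2)/(2*((ε:ℂ)-a*Complex.I)*(x:ℂ)^2)) := by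
  set b := (ε:ℂ)-a*Complex.I with hbdef
  have hre : 0 < b.re := by simp [hbdef, hε]
  have hint : Integrable (fun x : ℝ => Complex.exp (-b * (x:ℂ)^2)) := integrable_cexp_neg_mul_sq hre
  have gauss : (∫ x in Ioi (0:ℝ), Complex.exp (-b * (x:ℂ)^2)) = ((π:ℂ)/b)^(1/2 : ℂ)/2 :=
    integral_gaussian_complex_Ioi hre
  have hsplit : (∫ x in Ioi (0:ℝ), Complex.exp (-b * (x:ℂ)^2))
      = (∫ x in Ioc (0:ℝ) 1, Complex.exp (-b * (x:ℂ)^2))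
        + ∫ x in Ioi (1:ℝ), Complex.exp (-b * (x:ℂ)^2) := by
    rw [← Ioc_union_Ioi_eq_Ioi (zero_le_one (α := ℝ)),
      setIntegral_union (Ioc_disjoint_Ioi le_rfl) measurableSet_Ioi
        hint.integrableOn hint.integrableOn]
  have htail : (∫ x in Ioi (1:ℝ), Complex.exp (-b * (x:ℂ)^2))
      = -(bdry b 1) - ∫ x in Ioi (1:ℝ), Complex.exp (-b*(x:ℂ)^2)/(2*b*(x:ℂ)^2) :=
    tendsto_nhds_unique
      (intervalIntegral_tendsto_integral_Ioi 1 hint.integrableOn (tendsto_id (x := atTop)))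
      (tendsto_tail ha hε.le)
  rw [← gauss, hsplit, htail, intervalIntegral.integral_of_le (zero_le_one (α := ℝ))]

lemma norm_h_le {a ε : ℝ} (ha : 0 < a) (hε : 0 ≤ ε) {x : ℝ} (hx1 : 1 < x) :
    ‖Complex.exp (-((ε:ℂ) - a*Complex.I) * (x:ℂ)^2)/(2*((ε:ℂ) - a*Complex.I)*(x:ℂ)^2)‖
      ≤ (2*a)⁻¹ * x ^ (-2:ℝ) := by
  set b : ℂ := (ε:ℂ) - a*Complex.I with hbdef
  have hx0 : (0:ℝ) < x := by linarith
  rw [norm_div]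
  have hden : ‖2*b*(x:ℂ)^2‖ = 2 * ‖b‖ * x^2 := by
    simp [map_mul, abs_of_pos hx0, sq_abs]
  rw [hden]
  have h1 : ‖Complex.exp (-b * (x:ℂ)^2)‖ ≤ 1 := norm_exp_le hε x
  have h2 : 2 * a * x^2 ≤ 2 * ‖b‖ * x^2 := by
    have := babs ha hε
    nlinarith [sq_nonneg x]
  have hpos : 0 < 2 * a * x^2 := by positivity
  have hxr : x ^ (-2:ℝ) = (x^2)⁻¹ := by
    rw [Real.rpow_neg hx0.le, ← Real.rpow_natCast x 2]
    norm_num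
  calc ‖Complex.exp (-b * (x:ℂ)^2)‖ / (2 * ‖b‖ * x^2)
      ≤ 1 / (2 * a * x^2) := div_le_div₀ zero_le_one h1 hpos h2
    _ = (2*a)⁻¹ * x ^ (-2:ℝ) := by rw [hxr]; field_simp

lemma tendsto_b {a : ℝ} : Tendsto (fun ε : ℝ => (ε:ℂ) - a*Complex.I) (nhdsWithin 0 (Ioi 0))
    (nhds (((0:ℝ):ℂ) - a*Complex.I)) :=
  ((Complex.continuous_ofReal.sub continuous_const).tendsto 0).mono_left nhdsWithin_le_nhds

lemma limit_identity {a : ℝ} (ha : 0 < a) :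
    ((π:ℂ)/(((0:ℝ):ℂ) - a*Complex.I))^(1/2 : ℂ)/2
      = (∫ x in (0:ℝ)..1, Complex.exp (-(((0:ℝ):ℂ) - a*Complex.I) * (x:ℂ)^2))
        + (-(bdry (((0:ℝ):ℂ)-a*Complex.I) 1)
          - ∫ x in Ioi (1:ℝ),
              Complex.exp (-(((0:ℝ):ℂ)-a*Complex.I)*(x:ℂ)^2)/(2*(((0:ℝ):ℂ)-a*Complex.I)*(x:ℂ)^2)) := by
  set L := nhdsWithin (0:ℝ) (Ioi 0) with hLdef
  have hb0 : (((0:ℝ):ℂ) - a*Complex.I) ≠ 0 := b_ne_zero ha le_rfl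
  have hεpos : ∀ᶠ ε in L, ε ∈ Ioi (0:ℝ) := eventually_mem_nhdsWithin
  -- LHS tendsto
  have h1 : Tendsto (fun ε : ℝ => ((π:ℂ)/((ε:ℂ)-a*Complex.I))^(1/2 : ℂ)/2) L
      (nhds (((π:ℂ)/(((0:ℝ):ℂ) - a*Complex.I))^(1/2 : ℂ)/2)) := by
    have hdiv : Tendsto (fun ε : ℝ => (π:ℂ)/((ε:ℂ)-a*Complex.I)) L
        (nhds ((π:ℂ)/(((0:ℝ):ℂ) - a*Complex.I))) :=
      tendsto_const_nhds.div tendsto_b hb0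
    have hslit : (π:ℂ)/(((0:ℝ):ℂ) - a*Complex.I) ∈ Complex.slitPlane := by
      have hval : (π:ℂ)/(((0:ℝ):ℂ) - a*Complex.I) = ((π/a : ℝ):ℂ)*Complex.I := by
        rw [show ((0:ℝ):ℂ) - a*Complex.I = -((a:ℂ)*Complex.I) by push_cast; ring,
          div_neg, div_mul_eq_div_div, Complex.div_I]
        push_cast
        ring
      rw [Complex.mem_slitPlane_iff, hval]
      right
      simp [Real.pi_ne_zero, ne_of_gt ha, div_ne_zero Real.pi_ne_zero (ne_of_gt ha)]
    exact ((continuousAt_cpow_const hslit).tendsto.comp hdiv).div_const 2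
  -- first RHS term
  have h2 : Tendsto (fun ε : ℝ => ∫ x in (0:ℝ)..1, Complex.exp (-((ε:ℂ)-a*Complex.I) * (x:ℂ)^2)) L
      (nhds (∫ x in (0:ℝ)..1, Complex.exp (-(((0:ℝ):ℂ) - a*Complex.I) * (x:ℂ)^2))) := by
    apply intervalIntegral.tendsto_integral_filter_of_dominated_convergence (bound := fun _ => 1)
    · exact Eventually.of_forall fun ε => ((cont_f _).aestronglyMeasurable).restrict
    · filter_upwards [hεpos] with ε hε
      exact Eventually.of_forall fun x _ => norm_exp_le (le_of_lt hε) x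
    · exact intervalIntegrable_const
    · refine Eventually.of_forall fun x _ => ?_
      have : Tendsto (fun ε : ℝ => -((ε:ℂ)-a*Complex.I) * (x:ℂ)^2) L
          (nhds (-(((0:ℝ):ℂ) - a*Complex.I) * (x:ℂ)^2)) := (tendsto_b.neg).mul_const _
      exact (Complex.continuous_exp.tendsto _).comp this
  -- boundary term
  have h3 : Tendsto (fun ε : ℝ => bdry ((ε:ℂ)-a*Complex.I) 1) L
      (nhds (bdry (((0:ℝ):ℂ)-a*Complex.I) 1)) := by
    unfold bdry
    apply Tendsto.mul
    · exact (Complex.continuous_exp.tendsto _).comp ((tendsto_b.neg).mul_const _)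
    · apply Tendsto.div tendsto_const_nhds ((tendsto_b.const_mul 2).mul_const _)
      push_cast
      simpa using mul_ne_zero (mul_ne_zero (two_ne_zero) hb0) one_ne_zero
  -- tail term
  have h4 : Tendsto (fun ε : ℝ => ∫ x in Ioi (1:ℝ),
        Complex.exp (-((ε:ℂ)-a*Complex.I)*(x:ℂ)^2)/(2*((ε:ℂ)-a*Complex.I)*(x:ℂ)^2)) L
      (nhds (∫ x in Ioi (1:ℝ),
        Complex.exp (-(((0:ℝ):ℂ)-a*Complex.I)*(x:ℂ)^2)/(2*(((0:ℝ):ℂ)-a*Complex.I)*(x:ℂ)^2))) := by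
    apply MeasureTheory.tendsto_integral_filter_of_dominated_convergence
      (bound := fun x : ℝ => (2*a)⁻¹ * x ^ (-2:ℝ))
    · filter_upwards [hεpos] with ε hε
      exact ((contOn_h _ (b_ne_zero ha (le_of_lt hε))).mono
        (fun x (hx : x ∈ Ioi (1:ℝ)) => by
          simp only [mem_setOf_eq]; intro h; rw [h] at hx; norm_num at hx)).aestronglyMeasurable
        measurableSet_Ioi
    · filter_upwards [hεpos] with ε hε
      rw [ae_restrict_iff' measurableSet_Ioi]
      exact Eventually.of_forall fun x hx => norm_h_le ha (le_of_lt hε) hx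
    · exact ((integrableOn_Ioi_rpow_of_lt (by norm_num) one_pos).const_mul _)
    · rw [ae_restrict_iff' measurableSet_Ioi]
      refine Eventually.of_forall fun x hx => ?_
      have hx' : (x:ℂ)^2 ≠ 0 := pow_ne_zero 2 (Complex.ofReal_ne_zero.2 (by
        intro h; rw [h] at hx; norm_num at hx))
      apply Tendsto.div
      · exact (Complex.continuous_exp.tendsto _).comp ((tendsto_b.neg).mul_const _)
      · exact (tendsto_b.const_mul 2).mul_const _
      · exact mul_ne_zero (mul_ne_zero two_ne_zero hb0) hx'
  have hRHS := h2.add ((h3.neg).sub h4)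
  have hLHS : Tendsto (fun ε : ℝ => (∫ x in (0:ℝ)..1, Complex.exp (-((ε:ℂ)-a*Complex.I) * (x:ℂ)^2))
      + (-(bdry ((ε:ℂ)-a*Complex.I) 1)
        - ∫ x in Ioi (1:ℝ),
            Complex.exp (-((ε:ℂ)-a*Complex.I)*(x:ℂ)^2)/(2*((ε:ℂ)-a*Complex.I)*(x:ℂ)^2))) L
      (nhds (((π:ℂ)/(((0:ℝ):ℂ) - a*Complex.I))^(1/2 : ℂ)/2)) := by
    apply h1.congr'
    filter_upwards [hεpos] with ε hε
    exact gauss_identity ha hε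
  exact tendsto_nhds_unique hLHS hRHS

lemma fresnel_complex {a : ℝ} (ha : 0 < a) :
    Tendsto (fun R : ℝ => ∫ x in (0:ℝ)..R, Complex.exp (-(((0:ℝ):ℂ) - a*Complex.I) * (x:ℂ)^2))
      atTop (nhds (((π:ℂ)/(((0:ℝ):ℂ) - a*Complex.I))^(1/2 : ℂ)/2)) := by
  have h := (tendsto_const_nhds
      (x := ∫ x in (0:ℝ)..1, Complex.exp (-(((0:ℝ):ℂ) - a*Complex.I) * (x:ℂ)^2))
      (f := atTop (α := ℝ))).add (tendsto_tail ha le_rfl)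
  rw [limit_identity ha]
  apply h.congr
  intro R
  exact intervalIntegral.integral_add_adjacent_intervals
    ((cont_f _).intervalIntegrable 0 1) ((cont_f _).intervalIntegrable 1 R)

lemma const_eval {a : ℝ} (ha : 0 < a) :
    ((π:ℂ)/(((0:ℝ):ℂ) - a*Complex.I))^(1/2 : ℂ)/2
      = ((Real.sqrt (π/(2*a)) : ℂ) * (1 + Complex.I)) / 2 := by
  set x : ℂ := (Real.sqrt (π/(2*a)) : ℂ) * (1 + Complex.I) with hxdef
  have hsq : x^(2:ℕ) = (π:ℂ)/(((0:ℝ):ℂ)-a*Complex.I) := by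
    have hs : ((Real.sqrt (π/(2*a)) : ℂ))^2 = ((π/(2*a) : ℝ) : ℂ) := by
      rw [← Complex.ofReal_pow, Real.sq_sqrt (by positivity)]
    have hI2 : (1+Complex.I)^2 = 2*Complex.I := by
      rw [add_sq, Complex.I_sq]; ring
    rw [hxdef]
    push_cast
    rw [mul_pow, hs, hI2]
    have ha' : (a:ℂ) ≠ 0 := Complex.ofReal_ne_zero.2 (ne_of_gt ha)
    have hb0 : (0:ℂ) - a*Complex.I ≠ 0 := by
      simpa using b_ne_zero (ε := 0) ha le_rfl
    rw [eq_div_iff hb0]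
    have hI : Complex.I^2 = -1 := Complex.I_sq
    push_cast
    field_simp
    linear_combination (-(a:ℂ))*hI
  have hre : 0 < x.re := by
    rw [hxdef]
    simp [Complex.ofReal_re]
    positivity
  rw [show (1/2 : ℂ) = (2⁻¹ : ℂ) from one_div 2, ← hsq, Complex.sq_cpow_two_inv hre]

lemma fresnel_repr (a R : ℝ) :
    (∫ x in (0:ℝ)..R, Complex.exp (-(((0:ℝ):ℂ) - a*Complex.I) * (x:ℂ)^2))
    = ((∫ x in (0:ℝ)..R, Real.cos (a*x^2)) : ℂ)
      + ((∫ x in (0:ℝ)..R, Real.sin (a*x^2)) : ℂ)*Complex.I := by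
  have hcc : Continuous fun x : ℝ => ((Real.cos (a*x^2) : ℝ) : ℂ) :=
    Complex.continuous_ofReal.comp (Real.continuous_cos.comp (by continuity))
  have hsc : Continuous fun x : ℝ => ((Real.sin (a*x^2) : ℝ) : ℂ)*Complex.I :=
    (Complex.continuous_ofReal.comp (Real.continuous_sin.comp (by continuity))).mul
      continuous_const
  calc (∫ x in (0:ℝ)..R, Complex.exp (-(((0:ℝ):ℂ) - a*Complex.I) * (x:ℂ)^2))
      = ∫ x in (0:ℝ)..R,
          (((Real.cos (a*x^2) : ℝ):ℂ) + ((Real.sin (a*x^2) : ℝ):ℂ)*Complex.I) := by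
        apply intervalIntegral.integral_congr
        intro x _
        dsimp only
        rw [show -(((0:ℝ):ℂ) - a*Complex.I) * (x:ℂ)^2 = ((a*x^2 : ℝ):ℂ)*Complex.I by
          push_cast; ring, Complex.exp_mul_I, ← Complex.ofReal_cos, ← Complex.ofReal_sin]
    _ = (∫ x in (0:ℝ)..R, ((Real.cos (a*x^2) : ℝ):ℂ))
        + ∫ x in (0:ℝ)..R, ((Real.sin (a*x^2) : ℝ):ℂ)*Complex.I :=
        intervalIntegral.integral_add (hcc.intervalIntegrable 0 R) (hsc.intervalIntegrable 0 R)
    _ = _ := by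
        rw [intervalIntegral.integral_mul_const, intervalIntegral.integral_ofReal,
          intervalIntegral.integral_ofReal]

lemma val_split (s : ℝ) :
    ((s:ℂ) * (1 + Complex.I)) / 2 = ((s/2 : ℝ):ℂ) + ((s/2 : ℝ):ℂ)*Complex.I := by
  push_cast; ring

lemma fresnel_cos {a : ℝ} (ha : 0 < a) :
    Tendsto (fun R : ℝ => ∫ x in (0:ℝ)..R, Real.cos (a*x^2)) atTop
      (nhds (Real.sqrt (π/(2*a))/2)) := by
  have h := fresnel_complex ha
  rw [const_eval ha, val_split] at h
  have h2 := (Complex.continuous_re.tendsto _).comp h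
  refine (h2.congr (fun R => ?_)).mono_right (le_of_eq ?_)
  · show (∫ x in (0:ℝ)..R, Complex.exp (-(((0:ℝ):ℂ) - a*Complex.I) * (x:ℂ)^2)).re = _
    rw [fresnel_repr a R]
    simp only [intervalIntegral.integral_ofReal, Complex.add_re, Complex.mul_re, Complex.I_re, Complex.I_im, Complex.ofReal_re,
      Complex.ofReal_im]
    ring
  · simp

lemma fresnel_sin {a : ℝ} (ha : 0 < a) :
    Tendsto (fun R : ℝ => ∫ x in (0:ℝ)..R, Real.sin (a*x^2)) atTop
      (nhds (Real.sqrt (π/(2*a))/2)) := by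
  have h := fresnel_complex ha
  rw [const_eval ha, val_split] at h
  have h2 := (Complex.continuous_im.tendsto _).comp h
  refine (h2.congr (fun R => ?_)).mono_right (le_of_eq ?_)
  · show (∫ x in (0:ℝ)..R, Complex.exp (-(((0:ℝ):ℂ) - a*Complex.I) * (x:ℂ)^2)).im = _
    rw [fresnel_repr a R]
    simp only [intervalIntegral.integral_ofReal, Complex.add_im, Complex.mul_im, Complex.I_re, Complex.I_im, Complex.ofReal_re,
      Complex.ofReal_im]
    ring
  · simp

theorem stmt4 (a : ℝ) (ha : 0 < a) (s : ℝ) :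
    Tendsto (fun R : ℝ => ∫ x in (0:ℝ)..R, Real.sin (a * x ^ 2) * Real.cos (s * x)) atTop
      (nhds ((1 / 2) * Real.sqrt (π / (2 * a)) *
        (Real.cos (s ^ 2 / (4 * a)) - Real.sin (s ^ 2 / (4 * a))))) := by
  have ha' : a ≠ 0 := ne_of_gt ha
  set c : ℝ := s/(2*a) with hc
  set d : ℝ := s^2/(4*a) with hd
  set k : ℝ := Real.sqrt (π/(2*a))/2 with hk
  set f : ℝ → ℝ := fun u => Real.sin (a*u^2 - d) with hf
  have hfcont : Continuous f :=
    Real.continuous_sin.comp ((continuous_const.mul (continuous_pow 2)).sub continuous_const)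
  have hfint : ∀ p q : ℝ, IntervalIntegrable f volume p q :=
    fun p q => hfcont.intervalIntegrable p q
  set G : ℝ → ℝ := fun R => ∫ x in (0:ℝ)..R, f x with hG
  set S : ℝ → ℝ := fun R => ∫ x in (0:ℝ)..R, Real.sin (a*x^2) with hS
  set C : ℝ → ℝ := fun R => ∫ x in (0:ℝ)..R, Real.cos (a*x^2) with hC
  have key : ∀ R : ℝ, (∫ x in (0:ℝ)..R, Real.sin (a * x ^ 2) * Real.cos (s * x))
      = ((G (R+c) - G c) + (G (R-c) - G (-c)))/2 := by
    intro R
    have h1 : ∀ x : ℝ, Real.sin (a * x ^ 2) * Real.cos (s * x)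
        = (f (x+c) + f (x-c))/2 := by
      intro x
      have hc1 : a*(x+c)^2 - d = a*x^2 + s*x := by
        rw [hc, hd]; field_simp; ring
      have hc2 : a*(x-c)^2 - d = a*x^2 - s*x := by
        rw [hc, hd]; field_simp; ring
      rw [hf]
      dsimp only
      rw [hc1, hc2, Real.sin_add, Real.sin_sub]
      ring
    have e1 : (∫ x in (0:ℝ)..R, f (x+c)) = G (R+c) - G c := by
      rw [intervalIntegral.integral_comp_add_right f c, zero_add]
      exact (intervalIntegral.integral_interval_sub_left (hfint 0 (R+c)) (hfint 0 c)).symm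
    have e2 : (∫ x in (0:ℝ)..R, f (x-c)) = G (R-c) - G (-c) := by
      rw [intervalIntegral.integral_comp_sub_right f c, zero_sub]
      exact (intervalIntegral.integral_interval_sub_left (hfint 0 (R-c)) (hfint 0 (-c))).symm
    rw [intervalIntegral.integral_congr (fun x _ => h1 x)]
    have ia : IntervalIntegrable (fun x : ℝ => f (x+c)) volume 0 R :=
      (hfcont.comp (continuous_id.add continuous_const)).intervalIntegrable 0 R
    have ib : IntervalIntegrable (fun x : ℝ => f (x-c)) volume 0 R :=
      (hfcont.comp (continuous_id.sub continuous_const)).intervalIntegrable 0 R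
    rw [intervalIntegral.integral_div, intervalIntegral.integral_add ia ib, e1, e2]
  have hGrepr : ∀ u : ℝ, G u = Real.cos d * S u - Real.sin d * C u := by
    intro u
    rw [hG, hS, hC]
    dsimp only
    have i1 : IntervalIntegrable (fun x : ℝ => Real.cos d * Real.sin (a*x^2)) volume 0 u :=
      (continuous_const.mul (Real.continuous_sin.comp
        (continuous_const.mul (continuous_pow 2)))).intervalIntegrable 0 u
    have i2 : IntervalIntegrable (fun x : ℝ => Real.sin d * Real.cos (a*x^2)) volume 0 u :=
      (continuous_const.mul (Real.continuous_cos.comp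
        (continuous_const.mul (continuous_pow 2)))).intervalIntegrable 0 u
    calc (∫ x in (0:ℝ)..u, f x)
        = ∫ x in (0:ℝ)..u,
            (Real.cos d * Real.sin (a*x^2) - Real.sin d * Real.cos (a*x^2)) := by
          apply intervalIntegral.integral_congr
          intro x _
          rw [hf]
          dsimp only
          rw [Real.sin_sub]
          ring
      _ = (∫ x in (0:ℝ)..u, Real.cos d * Real.sin (a*x^2))
          - ∫ x in (0:ℝ)..u, Real.sin d * Real.cos (a*x^2) :=
          intervalIntegral.integral_sub i1 i2
      _ = Real.cos d * (∫ x in (0:ℝ)..u, Real.sin (a*x^2))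
          - Real.sin d * ∫ x in (0:ℝ)..u, Real.cos (a*x^2) := by
          rw [intervalIntegral.integral_const_mul, intervalIntegral.integral_const_mul]
  have hGlim : Tendsto G atTop (nhds (Real.cos d * k - Real.sin d * k)) := by
    have := ((fresnel_sin ha).const_mul (Real.cos d)).sub
      ((fresnel_cos ha).const_mul (Real.sin d))
    rw [hk]
    exact this.congr (fun u => (hGrepr u).symm)
  have hsh1 : Tendsto (fun R : ℝ => G (R+c)) atTop (nhds (Real.cos d * k - Real.sin d * k)) :=
    hGlim.comp (tendsto_atTop_add_const_right atTop c tendsto_id)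
  have hsh2 : Tendsto (fun R : ℝ => G (R-c)) atTop (nhds (Real.cos d * k - Real.sin d * k)) := by
    apply hGlim.comp
    apply tendsto_atTop_add_const_right atTop (-c) tendsto_id |>.congr
    intro R
    simp only [id_eq]
    ring
  have heven : ∀ x : ℝ, f (-x) = f x := by
    intro x
    rw [hf]
    dsimp only
    rw [show a*(-x)^2 - d = a*x^2 - d by ring]
  have hodd : G (-c) = -G c := by
    rw [hG]
    dsimp only
    rw [intervalIntegral.integral_symm (-c) 0]
    have h := intervalIntegral.integral_comp_neg (a := (0:ℝ)) (b := c) (f := f)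
    rw [neg_zero] at h
    rw [← h, intervalIntegral.integral_congr (fun x _ => heven x)]
  have hfinal := ((hsh1.sub (tendsto_const_nhds (x := G c))).add
    (hsh2.sub (tendsto_const_nhds (x := G (-c))))).div_const 2
  have hval : (1/2) * Real.sqrt (π/(2*a)) * (Real.cos d - Real.sin d)
      = ((Real.cos d * k - Real.sin d * k) - G c
        + ((Real.cos d * k - Real.sin d * k) - G (-c)))/2 := by
    rw [hodd, hk]; ring
  rw [hval]
  exact hfinal.congr (fun R => (key R).symm)
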